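/- arXiv:1503.02773 — 2 statements merged into one kernel-verified Lean document; each statement's English description precedes it below -/
import Mathlib

section
/- Let S be a slice of an LBFS of a graph G with maximal subslices x, S_1, ..., S_k in order, where x is adjacent to all of S_1, and let C_1, ..., C_ℓ be the co-components of G[S_1]. If the complement of G[S] is disconnected, then: (1) N(x) ∩ S = S_1; (2) x and all of S_2, ..., S_k lie in a single co-component C of G[S]; (3) each C_i is either contained in C or disjoint from C. -/
/-- The LBFS label of vertex `v` just before step `t`: for each earlier step `i < t`
(in increasing order of `i`) at which a neighbour of `v` was explored, the value `n - i`
is appended. -/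
def lbfsLabel {V : Type*} (G : SimpleGraph V) [DecidableRel G.Adj] (σ : ℕ → V)
    (n t : ℕ) (v : V) : List ℕ :=
  ((List.range t).filter (fun i => decide (G.Adj (σ i) v))).map (fun i => n - i)

/-- `σ` (restricted to `[0,n)`) is a Lexicographic Breadth-First Search ordering of `G`:
it enumerates all vertices, and at each step the chosen vertex has lexicographically
largest label among the unexplored vertices. -/
def IsLBFS {V : Type*} (G : SimpleGraph V) [DecidableRel G.Adj] (n : ℕ) (σ : ℕ → V) : Prop :=
  Set.BijOn σ (Set.Iio n) Set.univ ∧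
    ∀ t < n, ∀ v : V, (∀ i < t, σ i ≠ v) →
      ¬ List.Lex (· < ·) (lbfsLabel G σ n t (σ t)) (lbfsLabel G σ n t v)

/-- The slice defined at step `t`: the unexplored vertices sharing the (lexicographically
largest) label of the chosen vertex `σ t` just before step `t`. -/
def sliceAt {V : Type*} (G : SimpleGraph V) [DecidableRel G.Adj] (σ : ℕ → V) (n t : ℕ) :
    Set V :=
  {v | (∀ i < t, σ i ≠ v) ∧ lbfsLabel G σ n t v = lbfsLabel G σ n t (σ t)}

/-- `S` is a slice of the LBFS. -/
def IsSlice {V : Type*} (G : SimpleGraph V) [DecidableRel G.Adj] (σ : ℕ → V) (n : ℕ)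
    (S : Set V) : Prop :=
  ∃ t < n, S = sliceAt G σ n t

/-- The slice defined at step `u` is a maximal (proper) subslice of the slice at step `t`. -/
def IsMaxSubsliceAt {V : Type*} (G : SimpleGraph V) [DecidableRel G.Adj] (σ : ℕ → V)
    (n t u : ℕ) : Prop :=
  u < n ∧ sliceAt G σ n u ⊂ sliceAt G σ n t ∧
    ∀ w < n, ¬(sliceAt G σ n u ⊂ sliceAt G σ n w ∧ sliceAt G σ n w ⊂ sliceAt G σ n t)

/-- `u 1, …, u k` are the steps defining the maximal subslices `S_1, …, S_k` of the slice
at step `t`, listed in the order the LBFS defines them (the initial vertex `σ t`, as a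
singleton, being by convention the zeroth maximal subslice). -/
def MaxSubsliceEnum {V : Type*} (G : SimpleGraph V) [DecidableRel G.Adj] (σ : ℕ → V)
    (n t k : ℕ) (u : ℕ → ℕ) : Prop :=
  (∀ i, 1 ≤ i → i ≤ k → IsMaxSubsliceAt G σ n t (u i)) ∧
  (∀ i j, 1 ≤ i → i < j → j ≤ k → u i < u j) ∧
  (∀ i, 1 ≤ i → i ≤ k → t < u i) ∧
  (∀ w, w < n → IsMaxSubsliceAt G σ n t w →
    ∃ i, 1 ≤ i ∧ i ≤ k ∧ sliceAt G σ n w = sliceAt G σ n (u i))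

/-- The edge `ab` is active for the slice at step `t`: both endpoints lie in that slice
but in different maximal subslices of it (i.e. no maximal subslice contains both). -/
def activeFor {V : Type*} (G : SimpleGraph V) [DecidableRel G.Adj] (σ : ℕ → V)
    (n t : ℕ) (a b : V) : Prop :=
  G.Adj a b ∧ a ∈ sliceAt G σ n t ∧ b ∈ sliceAt G σ n t ∧
    ∀ w, IsMaxSubsliceAt G σ n t w → ¬(a ∈ sliceAt G σ n w ∧ b ∈ sliceAt G σ n w)
/-- `d` is a transitive orientation of the subgraph of `G` induced on `S`:
each edge of `G[S]` gets exactly one direction, and directions compose transitively. -/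
def IsTransOrientationOn {V : Type*} (G : SimpleGraph V) (S : Set V)
    (d : V → V → Prop) : Prop :=
  (∀ a b, d a b → G.Adj a b ∧ a ∈ S ∧ b ∈ S) ∧
  (∀ a b, G.Adj a b → a ∈ S → b ∈ S → d a b ∨ d b a) ∧
  (∀ a b, d a b → ¬ d b a) ∧
  (∀ a b c, d a b → d b c → d a c)

/-- `M` is a module of `G`: every vertex outside `M` is adjacent to all of `M` or to
none of `M`. -/
def IsModule {V : Type*} (G : SimpleGraph V) (M : Set V) : Prop :=
  ∀ v ∉ M, (∀ m ∈ M, G.Adj v m) ∨ (∀ m ∈ M, ¬ G.Adj v m)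

/-- `G` is prime: it has no non-trivial module. -/
def IsPrimeGraph {V : Type*} (G : SimpleGraph V) : Prop :=
  ∀ M : Set V, IsModule G M → M.Subsingleton ∨ M = Set.univ

/-- `C` is a connected component of the subgraph of `G` induced on `S`. -/
def IsComponentOn {V : Type*} (G : SimpleGraph V) (S C : Set V) : Prop :=
  C ⊆ S ∧ C.Nonempty ∧
  (∀ a ∈ C, ∀ b ∈ C, Relation.ReflTransGen (fun p q => p ∈ S ∧ q ∈ S ∧ G.Adj p q) a b) ∧
  (∀ a ∈ C, ∀ b ∈ S, G.Adj a b → b ∈ C)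

/-- `C` is a co-component of `G[S]`: a connected component of the complement of the
subgraph of `G` induced on `S`. -/
def IsCoComponentOn {V : Type*} (G : SimpleGraph V) (S C : Set V) : Prop :=
  C ⊆ S ∧ C.Nonempty ∧
  (∀ a ∈ C, ∀ b ∈ C,
    Relation.ReflTransGen (fun p q => p ∈ S ∧ q ∈ S ∧ p ≠ q ∧ ¬ G.Adj p q) a b) ∧
  (∀ a ∈ C, ∀ b ∈ S, a ≠ b → ¬ G.Adj a b → b ∈ C)

section LBFSAux

variable {V : Type*} (G : SimpleGraph V) [DecidableRel G.Adj] (σ : ℕ → V) (n : ℕ)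

private lemma lex_append : ∀ {a b : List ℕ} (s u : List ℕ), List.Lex (· < ·) a b →
    (∀ x ∈ b, ∀ y ∈ s, y < x) → List.Lex (· < ·) (a ++ s) (b ++ u) := by
  intro a b s u h
  induction h with
  | nil =>
      intro hs
      rename_i z b'
      cases s with
      | nil => exact List.Lex.nil
      | cons y s' =>
          exact List.Lex.rel (hs z List.mem_cons_self y List.mem_cons_self)
  | rel h' => exact fun _ => List.Lex.rel h'
  | cons h' ih =>
      intro hs
      exact List.Lex.cons (ih (fun m hm y hy => hs m (List.mem_cons_of_mem _ hm) y hy))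

private lemma lex_trichotomy (a b : List ℕ) :
    List.Lex (· < ·) a b ∨ a = b ∨ List.Lex (· < ·) b a :=
  trichotomous_of (List.Lex (· < ·)) a b

private lemma lex_asymm {a b : List ℕ} (h : List.Lex (· < ·) a b) :
    ¬ List.Lex (· < ·) b a :=
  asymm h

private lemma lex_irrefl (a : List ℕ) : ¬ List.Lex (· < ·) a a :=
  irrefl_of (List.Lex (· < ·)) a

private lemma lex_self_append (L : List ℕ) (a : ℕ) (s : List ℕ) :
    List.Lex (· < ·) L (L ++ a :: s) := by
  induction L with
  | nil => exact List.Lex.nil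
  | cons x L ih => exact List.Lex.cons ih

private lemma label_succ (w : ℕ) (v : V) :
    lbfsLabel G σ n (w + 1) v =
      lbfsLabel G σ n w v ++ (if G.Adj (σ w) v then [n - w] else []) := by
  unfold lbfsLabel
  rw [List.range_succ, List.filter_append, List.map_append]
  by_cases h : G.Adj (σ w) v <;> simp [h]

private lemma label_mem_bound {w m : ℕ} {v : V} (hw : w ≤ n)
    (hm : m ∈ lbfsLabel G σ n w v) : n - w < m := by
  unfold lbfsLabel at hm
  simp only [List.mem_map, List.mem_filter, List.mem_range] at hm
  obtain ⟨i, ⟨hi, _⟩, rfl⟩ := hm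
  omega

private lemma label_filter_self {w : ℕ} (hw : w ≤ n) (v : V) :
    (lbfsLabel G σ n w v).filter (fun m => decide (n - w < m)) = lbfsLabel G σ n w v :=
  List.filter_eq_self.mpr fun m hm => by
    simpa using label_mem_bound G σ n hw hm

private lemma label_restrict {w : ℕ} (hw : w ≤ n) (v : V) :
    ∀ w', w ≤ w' → w' ≤ n →
    lbfsLabel G σ n w v = (lbfsLabel G σ n w' v).filter (fun m => decide (n - w < m)) := by
  intro w'
  induction w' with
  | zero =>
      intro h1 _
      have : w = 0 := Nat.le_zero.mp h1
      subst this
      exact (label_filter_self G σ n hw v).symm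
  | succ w'' ih =>
      intro h1 h2
      rcases Nat.eq_or_lt_of_le h1 with rfl | hlt
      · exact (label_filter_self G σ n hw v).symm
      · have h1' : w ≤ w'' := Nat.lt_succ_iff.mp hlt
        have h2' : w'' ≤ n := by omega
        rw [label_succ, List.filter_append, ← ih h1' h2']
        have hz : (if G.Adj (σ w'') v then [n - w''] else []).filter
            (fun m => decide (n - w < m)) = [] := by
          by_cases h : G.Adj (σ w'') v <;> simp [h]
          omega
        rw [hz, List.append_nil]

private lemma slice_laminar {w w' : ℕ} (hww' : w < w') (hw' : w' < n) {v : V}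
    (h1 : v ∈ sliceAt G σ n w) (h2 : v ∈ sliceAt G σ n w') :
    sliceAt G σ n w' ⊆ sliceAt G σ n w := by
  intro y hy
  obtain ⟨hy1, hy2⟩ := hy
  obtain ⟨h11, h12⟩ := h1
  obtain ⟨h21, h22⟩ := h2
  have hw : w ≤ n := by omega
  have key : ∀ z₁ z₂ : V, lbfsLabel G σ n w' z₁ = lbfsLabel G σ n w' z₂ →
      lbfsLabel G σ n w z₁ = lbfsLabel G σ n w z₂ := by
    intro z₁ z₂ h
    rw [label_restrict G σ n hw z₁ w' hww'.le hw'.le,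
        label_restrict G σ n hw z₂ w' hww'.le hw'.le, h]
  refine ⟨fun i hi => hy1 i (hi.trans hww'), ?_⟩
  have hyv : lbfsLabel G σ n w' y = lbfsLabel G σ n w' v := by rw [hy2, h22]
  calc lbfsLabel G σ n w y = lbfsLabel G σ n w v := key _ _ hyv
    _ = lbfsLabel G σ n w (σ w) := h12

end LBFSAux

/-- if `x` is universal to `S_1` and the complement of `G[S]` is
disconnected, then `N(x) ∩ S = S_1`; `x` and `S_2, …, S_k` lie in one co-component `C`
of `G[S]`; and every co-component of `G[S_1]` is contained in or disjoint from `C`. -/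
theorem cocomponent_structure_of_slice {V : Type*} (G : SimpleGraph V)
    [DecidableRel G.Adj] (n : ℕ) (σ : ℕ → V) (hL : IsLBFS G n σ)
    (t : ℕ) (ht : t < n) (k : ℕ) (u : ℕ → ℕ) (hu : MaxSubsliceEnum G σ n t k u)
    (hk : 1 ≤ k)
    (hadj : ∀ v ∈ sliceAt G σ n (u 1), G.Adj (σ t) v)
    (ℓc : ℕ) (Cc : ℕ → Set V)
    (hCc : ∀ i, 1 ≤ i → i ≤ ℓc → IsCoComponentOn G (sliceAt G σ n (u 1)) (Cc i))
    (hCcAll : ∀ D, IsCoComponentOn G (sliceAt G σ n (u 1)) D →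
      ∃ i, 1 ≤ i ∧ i ≤ ℓc ∧ D = Cc i)
    (hdis : ∃ a ∈ sliceAt G σ n t, ∃ b ∈ sliceAt G σ n t,
      ¬ Relation.ReflTransGen
        (fun p q => p ∈ sliceAt G σ n t ∧ q ∈ sliceAt G σ n t ∧ p ≠ q ∧ ¬ G.Adj p q)
        a b) :
    G.neighborSet (σ t) ∩ sliceAt G σ n t = sliceAt G σ n (u 1) ∧
    ∃ C, IsCoComponentOn G (sliceAt G σ n t) C ∧ σ t ∈ C ∧
      (∀ i, 2 ≤ i → i ≤ k → sliceAt G σ n (u i) ⊆ C) ∧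
      (∀ i, 1 ≤ i → i ≤ ℓc → Cc i ⊆ C ∨ Disjoint (Cc i) C) := by
  
  classical
  obtain ⟨hbij, hlbfs⟩ := hL
  have hinj : Set.InjOn σ (Set.Iio n) := hbij.injOn
  have hselfmem : ∀ w, w < n → σ w ∈ sliceAt G σ n w := by
    intro w hw
    refine ⟨?_, rfl⟩
    intro i hi h
    have := hinj (Set.mem_Iio.mpr (hi.trans hw)) (Set.mem_Iio.mpr hw) h
    omega
  have hu1 : IsMaxSubsliceAt G σ n t (u 1) := hu.1 1 le_rfl hk
  have hu1n : u 1 < n := hu1.1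
  have htu1 : t < u 1 := hu.2.2.1 1 le_rfl hk
  have ht1n : t + 1 < n := by omega
  have hS1S : sliceAt G σ n (u 1) ⊆ sliceAt G σ n t := hu1.2.1.subset
  have hdisj : ∀ i, 2 ≤ i → i ≤ k →
      ∀ v, v ∈ sliceAt G σ n (u i) → v ∉ sliceAt G σ n (u 1) := by
    intro i h2 hik v hvi hv1
    have hui : IsMaxSubsliceAt G σ n t (u i) := hu.1 i (by omega) hik
    have huin : u i < n := hui.1
    have h1i : u 1 < u i := hu.2.1 1 i le_rfl (by omega) hik
    have hsub : sliceAt G σ n (u i) ⊆ sliceAt G σ n (u 1) :=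
      slice_laminar G σ n h1i huin hv1 hvi
    have hne : sliceAt G σ n (u i) ≠ sliceAt G σ n (u 1) := by
      intro h
      have h1 := hselfmem (u 1) hu1n
      rw [← h] at h1
      exact h1.1 (u 1) h1i rfl
    exact hui.2.2 (u 1) hu1n ⟨Set.ssubset_iff_subset_ne.mpr ⟨hsub, hne⟩, hu1.2.1⟩
  set L := lbfsLabel G σ n t (σ t) with hLdef
  have hselfu1 : σ (u 1) ∈ sliceAt G σ n (u 1) := hselfmem (u 1) hu1n
  have hσu1S : σ (u 1) ∈ sliceAt G σ n t := hS1S hselfu1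
  have hadju1 : G.Adj (σ t) (σ (u 1)) := hadj _ hselfu1
  have hlabadj : ∀ v ∈ sliceAt G σ n t, G.Adj (σ t) v →
      lbfsLabel G σ n (t + 1) v = L ++ [n - t] := by
    intro v hv ha
    rw [label_succ, hv.2, if_pos ha]
  have hlabnon : ∀ v ∈ sliceAt G σ n t, ¬ G.Adj (σ t) v →
      lbfsLabel G σ n (t + 1) v = L := by
    intro v hv ha
    rw [label_succ, hv.2, if_neg ha, List.append_nil]
  have hLbound : ∀ m ∈ L, n - t < m := fun m hm => label_mem_bound G σ n (le_of_lt ht) hm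
  have hLlt : List.Lex (· < ·) L (L ++ [n - t]) := lex_self_append L (n - t) []
  have hltstep : ∀ v : V, List.Lex (· < ·) (lbfsLabel G σ n t v) L →
      List.Lex (· < ·) (lbfsLabel G σ n (t + 1) v) (L ++ [n - t]) := by
    intro v hlt
    rw [label_succ]
    refine lex_append _ _ hlt ?_
    intro m hm y hy
    by_cases hA : G.Adj (σ t) v
    · rw [if_pos hA] at hy
      simp only [List.mem_singleton] at hy
      subst hy
      exact hLbound m hm
    · rw [if_neg hA] at hy
      simp at hy
  have hstepC : ∀ v : V, (∀ i < t + 1, σ i ≠ v) →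
      ¬ List.Lex (· < ·) (L ++ [n - t]) (lbfsLabel G σ n (t + 1) v) := by
    intro v hv
    have hvt : ∀ i < t, σ i ≠ v := fun i hi => hv i (by omega)
    have h0 : ¬ List.Lex (· < ·) L (lbfsLabel G σ n t v) := hlbfs t ht v hvt
    rcases lex_trichotomy (lbfsLabel G σ n t v) L with hlt | heq | hgt
    · exact fun h => lex_asymm (hltstep v hlt) h
    · rw [label_succ, heq]
      by_cases hA : G.Adj (σ t) v
      · rw [if_pos hA]
        exact lex_irrefl _
      · rw [if_neg hA, List.append_nil]
        exact fun h => lex_asymm hLlt h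
    · exact absurd hgt h0
  have hself1 : ∀ i < t + 1, σ i ≠ σ (t + 1) := (hselfmem (t + 1) ht1n).1
  have hu1unexp : ∀ i < t + 1, σ i ≠ σ (u 1) := fun i hi => hselfu1.1 i (by omega)
  have hlabu1 : lbfsLabel G σ n (t + 1) (σ (u 1)) = L ++ [n - t] := hlabadj _ hσu1S hadju1
  have hmax1 : ¬ List.Lex (· < ·) (lbfsLabel G σ n (t + 1) (σ (t + 1))) (L ++ [n - t]) := by
    have := hlbfs (t + 1) ht1n (σ (u 1)) hu1unexp
    rwa [hlabu1] at this
  have hT : lbfsLabel G σ n (t + 1) (σ (t + 1)) = L ++ [n - t] := by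
    rcases lex_trichotomy (lbfsLabel G σ n (t + 1) (σ (t + 1))) (L ++ [n - t]) with h | h | h
    · exact absurd h hmax1
    · exact h
    · exact absurd h (hstepC _ hself1)
  have hWslice : G.neighborSet (σ t) ∩ sliceAt G σ n t = sliceAt G σ n (t + 1) := by
    ext v
    constructor
    · rintro ⟨hvN, hvS⟩
      have hA : G.Adj (σ t) v := hvN
      refine ⟨?_, ?_⟩
      · intro i hi
        rcases Nat.lt_succ_iff_lt_or_eq.mp hi with h | rfl
        · exact hvS.1 i h
        · exact G.ne_of_adj hA
      · rw [hlabadj v hvS hA, hT]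
    · intro hv
      have hvt : ∀ i < t, σ i ≠ v := fun i hi => hv.1 i (by omega)
      have h0 : ¬ List.Lex (· < ·) L (lbfsLabel G σ n t v) := hlbfs t ht v hvt
      have hveq : lbfsLabel G σ n (t + 1) v = L ++ [n - t] := by rw [hv.2, hT]
      have hLeq : lbfsLabel G σ n t v = L := by
        rcases lex_trichotomy (lbfsLabel G σ n t v) L with h | h | h
        · exfalso
          have := hltstep v h
          rw [hveq] at this
          exact lex_irrefl _ this
        · exact h
        · exact absurd h h0
      have hvS : v ∈ sliceAt G σ n t := ⟨hvt, hLeq⟩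
      have hA : G.Adj (σ t) v := by
        by_contra hA
        have hl := hlabnon v hvS hA
        have heq : L = L ++ [n - t] := hl.symm.trans hveq
        have h2 := hLlt
        rw [← heq] at h2
        exact lex_irrefl _ h2
      exact ⟨hA, hvS⟩
  have hself1mem : σ (t + 1) ∈ sliceAt G σ n (t + 1) := hselfmem (t + 1) ht1n
  have hsubW : sliceAt G σ n (t + 1) ⊆ sliceAt G σ n t := by
    rw [← hWslice]
    exact fun v hv => hv.2
  have hmaxsub : IsMaxSubsliceAt G σ n t (t + 1) := by
    refine ⟨ht1n, ?_, ?_⟩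
    · refine Set.ssubset_iff_subset_ne.mpr ⟨hsubW, ?_⟩
      intro h
      have hx : σ t ∈ sliceAt G σ n (t + 1) := by
        rw [h]
        exact hselfmem t ht
      exact hx.1 t (by omega) rfl
    · intro w hw hcon
      obtain ⟨h1, h2⟩ := hcon
      have hw1 : σ w ∈ sliceAt G σ n w := hselfmem w hw
      have hwS : σ w ∈ sliceAt G σ n t := h2.subset hw1
      have hwt : t < w := by
        rcases Nat.lt_trichotomy w t with h | h | h
        · exact absurd rfl (hwS.1 w h)
        · subst h
          exact absurd h2 (ssubset_irrefl _)
        · exact h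
      have hwt1 : t + 1 < w := by
        rcases Nat.lt_or_ge (t + 1) w with h | h
        · exact h
        · have : w = t + 1 := by omega
          subst this
          exact absurd h1 (ssubset_irrefl _)
      have hmem : σ (t + 1) ∈ sliceAt G σ n w := h1.subset hself1mem
      exact h1.not_subset (slice_laminar G σ n hwt1 hw hself1mem hmem)
  obtain ⟨i, hi1, hik, hieq⟩ := hu.2.2.2 (t + 1) ht1n hmaxsub
  have hieq1 : sliceAt G σ n (t + 1) = sliceAt G σ n (u 1) := by
    rcases Nat.lt_or_ge i 2 with h | h
    · have : i = 1 := by omega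
      rwa [this] at hieq
    · exfalso
      have hm : σ (u 1) ∈ sliceAt G σ n (u i) := by
        rw [← hieq, ← hWslice]
        exact ⟨hadju1, hσu1S⟩
      exact hdisj i h hik _ hm hselfu1
  have hmain : G.neighborSet (σ t) ∩ sliceAt G σ n t = sliceAt G σ n (u 1) := by
    rw [hWslice, hieq1]
  refine ⟨hmain, ?_⟩
  set S := sliceAt G σ n t with hSdef
  set coR : V → V → Prop := fun p q => p ∈ S ∧ q ∈ S ∧ p ≠ q ∧ ¬ G.Adj p q with hcoR
  have hsymm : Symmetric coR := fun p q h =>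
    ⟨h.2.1, h.1, h.2.2.1.symm, fun h' => h.2.2.2 h'.symm⟩
  have hxS : σ t ∈ S := hselfmem t ht
  set C : Set V := {v | v ∈ S ∧ Relation.ReflTransGen coR (σ t) v} with hCdef
  have hCclosed : ∀ a ∈ C, ∀ b, coR a b → b ∈ C := fun a ha b hab =>
    ⟨hab.2.1, ha.2.trans (Relation.ReflTransGen.single hab)⟩
  have hCco : IsCoComponentOn G S C := by
    refine ⟨fun v hv => hv.1, ⟨σ t, hxS, Relation.ReflTransGen.refl⟩, ?_, ?_⟩
    · intro a ha b hb
      haveI : Std.Symm coR := ⟨hsymm⟩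
      exact (Std.Symm.symm _ _ ha.2).trans hb.2
    · intro a ha b hb hne hna
      exact hCclosed a ha b ⟨ha.1, hb, hne, hna⟩
  refine ⟨C, hCco, ⟨hxS, Relation.ReflTransGen.refl⟩, ?_, ?_⟩
  · intro i h2 hik v hv
    have hvS : v ∈ S := (hu.1 i (by omega) hik).2.1.subset hv
    have hnv : σ t ≠ v := hv.1 t (hu.2.2.1 i (by omega) hik)
    have hvnot1 : v ∉ sliceAt G σ n (u 1) := hdisj i h2 hik v hv
    have hna : ¬ G.Adj (σ t) v := by
      intro hA
      apply hvnot1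
      rw [← hmain]
      exact ⟨hA, hvS⟩
    exact ⟨hvS, Relation.ReflTransGen.single ⟨hxS, hvS, hnv, hna⟩⟩
  · intro i h1 hiℓ
    by_cases hd : Disjoint (Cc i) C
    · exact Or.inr hd
    · left
      obtain ⟨a, haD, haC⟩ := Set.not_disjoint_iff.mp hd
      have hDco := hCc i h1 hiℓ
      intro b hb
      have hpath := hDco.2.2.1 a haD b hb
      have hpath' : Relation.ReflTransGen coR a b := by
        refine Relation.ReflTransGen.mono ?_ _ _ hpath
        rintro p q ⟨hp, hq, hne, hna⟩
        exact ⟨hS1S hp, hS1S hq, hne, hna⟩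
      exact ⟨hS1S (hDco.1 hb), haC.2.trans hpath'⟩
end

section
/- Let S be a slice of an LBFS of a graph G with maximal subslices x, S_1, ..., S_k, where N(x) ∩ S = S_1, and let C_1, ..., C_ℓ be the co-components of G[S_1]. Define C = {x} ∪ S_2 ∪ ... ∪ S_k together with all C_i that are NOT universal to it (iteratively absorbing such C_i). Then the co-components of G[S] are exactly the C_i that are universal to the final set C, together with C itself. -/
section CoCompAux

variable {V : Type*} (G : SimpleGraph V) [DecidableRel G.Adj] (σ : ℕ → V) (n : ℕ)

lemma mem_label_iff {s : ℕ} {z : V} {m : ℕ} :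
    m ∈ lbfsLabel G σ n s z ↔ ∃ j, j < s ∧ G.Adj (σ j) z ∧ n - j = m := by
  simp [lbfsLabel, List.mem_map, List.mem_filter, List.mem_range, and_assoc]

lemma label_adj_iff {s : ℕ} (hs : s ≤ n) {v w : V}
    (h : lbfsLabel G σ n s v = lbfsLabel G σ n s w) :
    ∀ i, i < s → (G.Adj (σ i) v ↔ G.Adj (σ i) w) := by
  intro i hi
  have gen : ∀ z y : V, lbfsLabel G σ n s z = lbfsLabel G σ n s y →
      G.Adj (σ i) z → G.Adj (σ i) y := by
    intro z y hzy ha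
    have hm : (n - i) ∈ lbfsLabel G σ n s z := (mem_label_iff G σ n).2 ⟨i, hi, ha, rfl⟩
    rw [hzy] at hm
    obtain ⟨j, hj, haj, hji⟩ := (mem_label_iff G σ n).1 hm
    have : j = i := by omega
    rwa [this] at haj
  exact ⟨gen v w h, gen w v h.symm⟩

lemma label_eq_of_adj_eq {s : ℕ} {v w : V}
    (h : ∀ i, i < s → (G.Adj (σ i) v ↔ G.Adj (σ i) w)) :
    lbfsLabel G σ n s v = lbfsLabel G σ n s w := by
  unfold lbfsLabel
  congr 1
  apply List.filter_congr
  intro i hi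
  simp only [List.mem_range] at hi
  simp [h i hi]

lemma slice_mono {a b : ℕ} (hab : a ≤ b) (hb : b ≤ n) {v : V}
    (hva : v ∈ sliceAt G σ n a) (hvb : v ∈ sliceAt G σ n b) :
    sliceAt G σ n b ⊆ sliceAt G σ n a := by
  intro w hw
  have hadj := label_adj_iff G σ n hb (hw.2.trans hvb.2.symm)
  refine ⟨fun i hi => hw.1 i (lt_of_lt_of_le hi hab), ?_⟩
  have h1 : lbfsLabel G σ n a w = lbfsLabel G σ n a v :=
    label_eq_of_adj_eq G σ n (fun i hi => hadj i (lt_of_lt_of_le hi hab))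
  rw [h1, hva.2]

lemma self_mem_slice (hinj : Set.InjOn σ (Set.Iio n)) {s : ℕ} (hs : s < n) :
    σ s ∈ sliceAt G σ n s :=
  ⟨fun i hi h => absurd (hinj (lt_trans hi hs) hs h) (Nat.ne_of_lt hi), rfl⟩

lemma explored_not_mem {s s' : ℕ} (h : s' < s) : σ s' ∉ sliceAt G σ n s :=
  fun hm => hm.1 s' h rfl

lemma maxsub_disjoint (hinj : Set.InjOn σ (Set.Iio n)) {t w1 w2 : ℕ}
    (h1 : IsMaxSubsliceAt G σ n t w1) (h2 : IsMaxSubsliceAt G σ n t w2) (hlt : w1 < w2) :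
    ∀ v, v ∈ sliceAt G σ n w1 → v ∈ sliceAt G σ n w2 → False := by
  intro v hv1 hv2
  have hsub : sliceAt G σ n w2 ⊆ sliceAt G σ n w1 :=
    slice_mono G σ n (le_of_lt hlt) (le_of_lt h2.1) hv1 hv2
  have hne : sliceAt G σ n w2 ≠ sliceAt G σ n w1 := by
    intro he
    have hm := self_mem_slice G σ n hinj h1.1
    rw [← he] at hm
    exact explored_not_mem G σ n hlt hm
  exact h2.2.2 w1 h1.1 ⟨lt_of_le_of_ne hsub hne, h1.2.1⟩

lemma coverage (hL : IsLBFS G n σ) {t : ℕ} (ht : t < n) {k : ℕ} {u : ℕ → ℕ}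
    (hu : MaxSubsliceEnum G σ n t k u) {v : V} (hv : v ∈ sliceAt G σ n t)
    (hvx : v ≠ σ t) : ∃ i, 1 ≤ i ∧ i ≤ k ∧ v ∈ sliceAt G σ n (u i) := by
  classical
  have hinj : Set.InjOn σ (Set.Iio n) := hL.1.2.1
  obtain ⟨s, hs, rfl⟩ := hL.1.2.2 (Set.mem_univ v)
  have hsn : s < n := hs
  have hts : t < s := by
    rcases lt_trichotomy s t with h | h | h
    · exact absurd rfl (hv.1 s h)
    · exact absurd (congrArg σ h) (h ▸ hvx)
    · exact h
  have hvs : σ s ∈ sliceAt G σ n s := self_mem_slice G σ n hinj hsn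
  have hssub : sliceAt G σ n s ⊆ sliceAt G σ n t :=
    slice_mono G σ n (le_of_lt hts) (le_of_lt hsn) hv hvs
  have hproper : sliceAt G σ n s ⊂ sliceAt G σ n t := by
    refine lt_of_le_of_ne hssub (fun he => ?_)
    have hm := self_mem_slice G σ n hinj ht
    rw [← he] at hm
    exact explored_not_mem G σ n hts hm
  have hP : ∃ w, t < w ∧ w < n ∧ σ s ∈ sliceAt G σ n w ∧
      sliceAt G σ n w ⊂ sliceAt G σ n t := ⟨s, hts, hsn, hvs, hproper⟩
  obtain ⟨hw1, hw2, hw3, hw4⟩ := Nat.find_spec hP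
  set w := Nat.find hP with hwdef
  have hmax : IsMaxSubsliceAt G σ n t w := by
    refine ⟨hw2, hw4, ?_⟩
    intro w' hw'n hcontra
    obtain ⟨hsub1, hsub2⟩ := hcontra
    have hvw' : σ s ∈ sliceAt G σ n w' := hsub1.le hw3
    have htw' : t < w' := by
      have hmem : σ w' ∈ sliceAt G σ n t :=
        hsub2.le (self_mem_slice G σ n hinj hw'n)
      rcases lt_trichotomy w' t with h | h | h
      · exact absurd rfl (hmem.1 w' h)
      · exact absurd (h ▸ hsub2) (lt_irrefl _)
      · exact h
    have hle : w ≤ w' := Nat.find_min' hP ⟨htw', hw'n, hvw', hsub2⟩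
    have : sliceAt G σ n w' ⊆ sliceAt G σ n w :=
      slice_mono G σ n hle (le_of_lt hw'n) hw3 hvw'
    exact absurd (lt_of_lt_of_le hsub1 this) (lt_irrefl _)
  obtain ⟨i, hi1, hi2, heq⟩ := hu.2.2.2 w hw2 hmax
  exact ⟨i, hi1, hi2, heq ▸ hw3⟩

lemma closed_of_reachable {S C : Set V} (G : SimpleGraph V)
    (hcl : ∀ a ∈ C, ∀ b ∈ S, a ≠ b → ¬ G.Adj a b → b ∈ C) {a b : V}
    (hab : Relation.ReflTransGen (fun p q => p ∈ S ∧ q ∈ S ∧ p ≠ q ∧ ¬ G.Adj p q) a b)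
    (ha : a ∈ C) : b ∈ C := by
  induction hab with
  | refl => exact ha
  | tail h1 h2 ih => exact hcl _ ih _ h2.2.1 h2.2.2.1 h2.2.2.2

lemma cocomp_eq_of_inter {S C1 C2 : Set V} (G : SimpleGraph V)
    (h1 : IsCoComponentOn G S C1) (h2 : IsCoComponentOn G S C2) {v : V}
    (hv1 : v ∈ C1) (hv2 : v ∈ C2) : C1 = C2 := by
  ext w
  constructor
  · intro hw; exact closed_of_reachable G h2.2.2.2 (h1.2.2.1 v hv1 w hw) hv2
  · intro hw; exact closed_of_reachable G h1.2.2.2 (h2.2.2.1 v hv2 w hw) hv1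

lemma exists_cocomp {S : Set V} (G : SimpleGraph V) {v : V} (hv : v ∈ S) :
    ∃ D, IsCoComponentOn G S D ∧ v ∈ D := by
  have hsymm : Symmetric (fun p q : V => p ∈ S ∧ q ∈ S ∧ p ≠ q ∧ ¬ G.Adj p q) :=
    fun p q h => ⟨h.2.1, h.1, Ne.symm h.2.2.1, fun ha => h.2.2.2 ha.symm⟩
  have hsub : ∀ w, Relation.ReflTransGen
      (fun p q : V => p ∈ S ∧ q ∈ S ∧ p ≠ q ∧ ¬ G.Adj p q) v w → w ∈ S := by
    intro w hw
    rcases Relation.ReflTransGen.cases_tail hw with h | ⟨c, _, hc⟩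
    · rw [h]; exact hv
    · exact hc.2.1
  refine ⟨{w | Relation.ReflTransGen
      (fun p q : V => p ∈ S ∧ q ∈ S ∧ p ≠ q ∧ ¬ G.Adj p q) v w},
    ⟨hsub, ⟨v, Relation.ReflTransGen.refl⟩,
      fun a ha b hb => Relation.ReflTransGen.trans
        ((@Relation.ReflTransGen.stdSymm _ _ ⟨fun _ _ h => hsymm h⟩).symm _ _ ha) hb,
      fun a ha b hb hne hnadj =>
        Relation.ReflTransGen.tail ha ⟨hsub a ha, hb, hne, hnadj⟩⟩,
    Relation.ReflTransGen.refl⟩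

lemma cocomp_universal {S C1 C2 : Set V} (G : SimpleGraph V)
    (h1 : IsCoComponentOn G S C1) (h2 : IsCoComponentOn G S C2) (hne : C1 ≠ C2) :
    ∀ a ∈ C1, ∀ b ∈ C2, G.Adj a b := by
  intro a ha b hb
  by_contra hnadj
  by_cases hab : a = b
  · exact hne (cocomp_eq_of_inter G h1 h2 ha (hab ▸ hb))
  · exact hne (cocomp_eq_of_inter G h1 h2
      (h1.2.2.2 a ha b (h2.1 hb) hab hnadj) hb)

lemma cocomp_connected_mono {S S' C : Set V} (G : SimpleGraph V) (hSS : S' ⊆ S)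
    (h : IsCoComponentOn G S' C) : ∀ a ∈ C, ∀ b ∈ C,
      Relation.ReflTransGen (fun p q => p ∈ S ∧ q ∈ S ∧ p ≠ q ∧ ¬ G.Adj p q) a b := by
  intro a ha b hb
  refine Relation.ReflTransGen.mono ?_ a b (h.2.2.1 a ha b hb)
  intro p q hpq
  exact ⟨hSS hpq.1, hSS hpq.2.1, hpq.2.2⟩

lemma path_restrict {S S' D : Set V} (G : SimpleGraph V) (hD : D ⊆ S')
    (hcl : ∀ a ∈ D, ∀ b ∈ S, a ≠ b → ¬ G.Adj a b → b ∈ D) {a b : V} (ha : a ∈ D)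
    (hab : Relation.ReflTransGen (fun p q => p ∈ S ∧ q ∈ S ∧ p ≠ q ∧ ¬ G.Adj p q) a b) :
    Relation.ReflTransGen (fun p q => p ∈ S' ∧ q ∈ S' ∧ p ≠ q ∧ ¬ G.Adj p q) a b := by
  induction hab with
  | refl => exact Relation.ReflTransGen.refl
  | @tail c d h1 h2 ih =>
    have hc : c ∈ D := closed_of_reachable G hcl h1 ha
    have hd : d ∈ D := hcl c hc d h2.2.1 h2.2.2.1 h2.2.2.2
    exact Relation.ReflTransGen.tail ih ⟨hD hc, hD hd, h2.2.2.1, h2.2.2.2⟩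

end CoCompAux

open Classical in
/-- starting from `C = {x} ∪ S_2 ∪ ⋯ ∪ S_k` and iteratively absorbing
every co-component `C_i` of `G[S_1]` that is not universal to the current `C`, the
co-components of `G[S]` are exactly the `C_i` universal to the final `C`, together
with `C` itself. -/
theorem cocomponents_of_slice_algorithm {V : Type*} (G : SimpleGraph V)
    [DecidableRel G.Adj] (n : ℕ) (σ : ℕ → V) (hL : IsLBFS G n σ)
    (t : ℕ) (ht : t < n) (k : ℕ) (u : ℕ → ℕ) (hu : MaxSubsliceEnum G σ n t k u)
    (hk : 1 ≤ k)
    (hNx : G.neighborSet (σ t) ∩ sliceAt G σ n t = sliceAt G σ n (u 1))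
    (ℓc : ℕ) (Cc : ℕ → Set V)
    (hCc : ∀ i, 1 ≤ i → i ≤ ℓc → IsCoComponentOn G (sliceAt G σ n (u 1)) (Cc i))
    (hCcAll : ∀ D, IsCoComponentOn G (sliceAt G σ n (u 1)) D →
      ∃ i, 1 ≤ i ∧ i ≤ ℓc ∧ D = Cc i)
    (hCcDistinct : ∀ i j, 1 ≤ i → i < j → j ≤ ℓc → Cc i ≠ Cc j)
    (Cseq : ℕ → Set V)
    (h0 : Cseq 0 = {σ t} ∪ ⋃ i ∈ Set.Icc 2 k, sliceAt G σ n (u i))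
    (hstep : ∀ i, 1 ≤ i → i ≤ ℓc →
      Cseq i = if (∀ a ∈ Cc i, ∀ b ∈ Cseq (i - 1), G.Adj a b) then Cseq (i - 1)
               else Cseq (i - 1) ∪ Cc i) :
    ∀ D : Set V, IsCoComponentOn G (sliceAt G σ n t) D ↔
      (D = Cseq ℓc ∨
        ∃ i, 1 ≤ i ∧ i ≤ ℓc ∧ (∀ a ∈ Cc i, ∀ b ∈ Cseq ℓc, G.Adj a b) ∧ D = Cc i) := by
  classical
  have hinj : Set.InjOn σ (Set.Iio n) := hL.1.2.1
  -- basic structural facts about the slice and its maximal subslices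
  have hxS : σ t ∈ sliceAt G σ n t := self_mem_slice G σ n hinj ht
  have hSiS : ∀ i, 1 ≤ i → i ≤ k → sliceAt G σ n (u i) ⊆ sliceAt G σ n t :=
    fun i h1 h2 => (hu.1 i h1 h2).2.1.le
  have hxnotSi : ∀ i, 1 ≤ i → i ≤ k → σ t ∉ sliceAt G σ n (u i) :=
    fun i h1 h2 => explored_not_mem G σ n (hu.2.2.1 i h1 h2)
  have hSdisj : ∀ i j, 1 ≤ i → 1 ≤ j → i ≤ k → j ≤ k → i ≠ j →
      ∀ v, v ∈ sliceAt G σ n (u i) → v ∈ sliceAt G σ n (u j) → False := by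
    intro i j hi1 hj1 hik hjk hij v hvi hvj
    rcases lt_or_gt_of_ne hij with h | h
    · exact maxsub_disjoint G σ n hinj (hu.1 i hi1 hik) (hu.1 j hj1 hjk)
        (hu.2.1 i j hi1 h hjk) v hvi hvj
    · exact maxsub_disjoint G σ n hinj (hu.1 j hj1 hjk) (hu.1 i hi1 hik)
        (hu.2.1 j i hj1 h hik) v hvj hvi
  have hS1S : sliceAt G σ n (u 1) ⊆ sliceAt G σ n t := hSiS 1 le_rfl hk
  -- description of `Cseq 0`
  have hmemC0 : ∀ v : V, v ∈ Cseq 0 ↔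
      (v = σ t ∨ ∃ i, 2 ≤ i ∧ i ≤ k ∧ v ∈ sliceAt G σ n (u i)) := by
    intro v
    rw [h0]
    simp only [Set.mem_union, Set.mem_singleton_iff, Set.mem_iUnion, Set.mem_Icc,
      exists_prop]
    constructor
    · rintro (h | ⟨i, ⟨ha, hb⟩, hc⟩)
      · exact Or.inl h
      · exact Or.inr ⟨i, ha, hb, hc⟩
    · rintro (h | ⟨i, ha, hb, hc⟩)
      · exact Or.inl h
      · exact Or.inr ⟨i, ⟨ha, hb⟩, hc⟩
  have hxC0 : σ t ∈ Cseq 0 := (hmemC0 (σ t)).2 (Or.inl rfl)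
  have hC0S : Cseq 0 ⊆ sliceAt G σ n t := by
    intro v hv
    rcases (hmemC0 v).1 hv with rfl | ⟨i, h2, hik, hvi⟩
    · exact hxS
    · exact hSiS i (by omega) hik hvi
  have hC0S1 : ∀ v ∈ Cseq 0, v ∉ sliceAt G σ n (u 1) := by
    intro v hv hv1
    rcases (hmemC0 v).1 hv with rfl | ⟨i, h2, hik, hvi⟩
    · exact hxnotSi 1 le_rfl hk hv1
    · exact hSdisj i 1 (by omega) le_rfl hik hk (by omega) v hvi hv1
  have hxC0adj : ∀ v ∈ Cseq 0, v ≠ σ t → (σ t ≠ v ∧ ¬ G.Adj (σ t) v) := by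
    intro v hv hvx
    refine ⟨Ne.symm hvx, fun hadj => ?_⟩
    have hmem : v ∈ G.neighborSet (σ t) ∩ sliceAt G σ n t := ⟨hadj, hC0S hv⟩
    rw [hNx] at hmem
    exact hC0S1 v hv hmem
  -- coverage of the slice
  have cover : ∀ v ∈ sliceAt G σ n t, v ∈ sliceAt G σ n (u 1) ∨ v ∈ Cseq 0 := by
    intro v hv
    by_cases hvx : v = σ t
    · exact Or.inr (hvx ▸ hxC0)
    · obtain ⟨i, h1, h2, hvi⟩ := coverage G σ n hL ht hu hv hvx
      by_cases hi1 : i = 1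
      · exact Or.inl (hi1 ▸ hvi)
      · exact Or.inr ((hmemC0 v).2 (Or.inr ⟨i, by omega, h2, hvi⟩))
  -- facts about the co-components of S1
  have hCcS1 : ∀ i, 1 ≤ i → i ≤ ℓc → Cc i ⊆ sliceAt G σ n (u 1) :=
    fun i h1 h2 => (hCc i h1 h2).1
  have hCcne : ∀ i j, 1 ≤ i → 1 ≤ j → i ≤ ℓc → j ≤ ℓc → i ≠ j → Cc i ≠ Cc j := by
    intro i j hi1 hj1 hik hjk hij
    rcases lt_or_gt_of_ne hij with h | h
    · exact hCcDistinct i j hi1 h hjk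
    · exact (hCcDistinct j i hj1 h hik).symm
  have hCcuniv : ∀ i j, 1 ≤ i → 1 ≤ j → i ≤ ℓc → j ≤ ℓc → i ≠ j →
      ∀ a ∈ Cc i, ∀ b ∈ Cc j, G.Adj a b := fun i j hi1 hj1 hik hjk hij =>
    cocomp_universal G (hCc i hi1 hik) (hCc j hj1 hjk) (hCcne i j hi1 hj1 hik hjk hij)
  have hCcdisj : ∀ i j, 1 ≤ i → 1 ≤ j → i ≤ ℓc → j ≤ ℓc → i ≠ j →
      ∀ v, v ∈ Cc i → v ∈ Cc j → False := by
    intro i j hi1 hj1 hik hjk hij v hvi hvj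
    exact hCcne i j hi1 hj1 hik hjk hij
      (cocomp_eq_of_inter G (hCc i hi1 hik) (hCc j hj1 hjk) hvi hvj)
  -- the recursion for Cseq
  have hstep' : ∀ p, p < ℓc →
      Cseq (p + 1) = if (∀ a ∈ Cc (p + 1), ∀ b ∈ Cseq p, G.Adj a b) then Cseq p
                     else Cseq p ∪ Cc (p + 1) := by
    intro p hp
    have h := hstep (p + 1) (by omega) (by omega)
    simpa using h
  have hmono : ∀ p q, p ≤ q → q ≤ ℓc → Cseq p ⊆ Cseq q := by
    intro p q hpq hq
    induction q with
    | zero =>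
      have : p = 0 := by omega
      rw [this]
    | succ m ih =>
      rcases Nat.lt_or_ge p (m + 1) with h | h
      · have hsub : Cseq m ⊆ Cseq (m + 1) := by
          rw [hstep' m (by omega)]
          split
          · exact subset_rfl
          · exact Set.subset_union_left
        exact (ih (by omega) (by omega)).trans hsub
      · have : p = m + 1 := by omega
        rw [this]
  have key : ∀ m, m ≤ ℓc → ∀ v ∈ Cseq m, v ∈ Cseq 0 ∨
      ∃ j, 1 ≤ j ∧ j ≤ m ∧ ¬(∀ a ∈ Cc j, ∀ b ∈ Cseq (j - 1), G.Adj a b) ∧ v ∈ Cc j := by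
    intro m
    induction m with
    | zero => exact fun _ v hv => Or.inl hv
    | succ p ih =>
      intro hm v hv
      rw [hstep' p (by omega)] at hv
      by_cases hcond : (∀ a ∈ Cc (p + 1), ∀ b ∈ Cseq p, G.Adj a b)
      · rw [if_pos hcond] at hv
        rcases ih (by omega) v hv with h | ⟨j, hj1, hj2, hj3, hj4⟩
        · exact Or.inl h
        · exact Or.inr ⟨j, hj1, by omega, hj3, hj4⟩
      · rw [if_neg hcond] at hv
        rcases hv with hv | hv
        · rcases ih (by omega) v hv with h | ⟨j, hj1, hj2, hj3, hj4⟩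
          · exact Or.inl h
          · exact Or.inr ⟨j, hj1, by omega, hj3, hj4⟩
        · exact Or.inr ⟨p + 1, by omega, le_rfl, by simpa using hcond, hv⟩
  have hCseqS : ∀ m, m ≤ ℓc → Cseq m ⊆ sliceAt G σ n t := by
    intro m hm v hv
    rcases key m hm v hv with h | ⟨j, hj1, hj2, _, hj4⟩
    · exact hC0S h
    · exact hS1S (hCcS1 j hj1 (le_trans hj2 hm) hj4)
  have absorbed_sub : ∀ j, 1 ≤ j → j ≤ ℓc →
      ¬(∀ a ∈ Cc j, ∀ b ∈ Cseq (j - 1), G.Adj a b) → Cc j ⊆ Cseq ℓc := by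
    intro j h1 h2 hnc
    have hstepj := hstep j h1 h2
    rw [if_neg hnc] at hstepj
    have hsub : Cc j ⊆ Cseq j := by rw [hstepj]; exact Set.subset_union_right
    exact hsub.trans (hmono j ℓc h2 le_rfl)
  have hCcC0disj : ∀ j, 1 ≤ j → j ≤ ℓc → ∀ v ∈ Cc j, v ∉ Cseq 0 :=
    fun j h1 h2 v hv hv0 => hC0S1 v hv0 (hCcS1 j h1 h2 hv)
  have univ_final : ∀ i, 1 ≤ i → i ≤ ℓc →
      (∀ a ∈ Cc i, ∀ b ∈ Cseq (i - 1), G.Adj a b) →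
      ∀ a ∈ Cc i, ∀ b ∈ Cseq ℓc, G.Adj a b := by
    intro i h1 h2 hcond a ha b hb
    rcases key ℓc le_rfl b hb with h | ⟨j, hj1, hj2, hj3, hj4⟩
    · exact hcond a ha b (hmono 0 (i - 1) (Nat.zero_le _) (by omega) h)
    · have hij : i ≠ j := fun he => hj3 (he ▸ hcond)
      exact hCcuniv i j h1 hj1 h2 hj2 hij a ha b hj4
  have hxCfin : σ t ∈ Cseq ℓc := hmono 0 ℓc (Nat.zero_le _) le_rfl hxC0
  -- the final set Cseq ℓc is co-connected to x
  have hsymm : Symmetric (fun p q : V => p ∈ sliceAt G σ n t ∧ q ∈ sliceAt G σ n t ∧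
      p ≠ q ∧ ¬ G.Adj p q) :=
    fun p q h => ⟨h.2.1, h.1, Ne.symm h.2.2.1, fun hadj => h.2.2.2 hadj.symm⟩
  have conn_x : ∀ m, m ≤ ℓc → ∀ v ∈ Cseq m,
      Relation.ReflTransGen (fun p q => p ∈ sliceAt G σ n t ∧ q ∈ sliceAt G σ n t ∧
        p ≠ q ∧ ¬ G.Adj p q) (σ t) v := by
    intro m
    induction m with
    | zero =>
      intro _ v hv
      by_cases hvx : v = σ t
      · rw [hvx]
      · obtain ⟨hne, hnadj⟩ := hxC0adj v hv hvx
        exact Relation.ReflTransGen.single ⟨hxS, hC0S hv, hne, hnadj⟩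
    | succ p ih =>
      intro hm v hv
      rw [hstep' p (by omega)] at hv
      by_cases hcond : (∀ a ∈ Cc (p + 1), ∀ b ∈ Cseq p, G.Adj a b)
      · rw [if_pos hcond] at hv
        exact ih (by omega) v hv
      · rw [if_neg hcond] at hv
        rcases hv with hv | hv
        · exact ih (by omega) v hv
        · push_neg at hcond
          obtain ⟨a, ha, b, hb, hnadj⟩ := hcond
          have haS1 : a ∈ sliceAt G σ n (u 1) := hCcS1 (p + 1) (by omega) (by omega) ha
          have hab : a ≠ b := by
            intro he
            subst he
            rcases key p (by omega) a hb with h | ⟨j, hj1, hj2, _, hj4⟩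
            · exact hCcC0disj (p + 1) (by omega) (by omega) a ha h
            · exact hCcdisj (p + 1) j (by omega) hj1 (by omega) (by omega) (by omega)
                a ha hj4
          have hxb := ih (by omega) b hb
          have hbS : b ∈ sliceAt G σ n t := hCseqS p (by omega) hb
          have hba : Relation.ReflTransGen (fun p q => p ∈ sliceAt G σ n t ∧
              q ∈ sliceAt G σ n t ∧ p ≠ q ∧ ¬ G.Adj p q) b a :=
            Relation.ReflTransGen.single
              ⟨hbS, hS1S haS1, Ne.symm hab, fun h => hnadj h.symm⟩
          have hav := cocomp_connected_mono G hS1S (hCc (p + 1) (by omega) (by omega))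
            a ha v hv
          exact (hxb.trans hba).trans hav
  -- Cseq ℓc is a co-component of the slice
  have hCmain : IsCoComponentOn G (sliceAt G σ n t) (Cseq ℓc) := by
    refine ⟨hCseqS ℓc le_rfl, ⟨σ t, hxCfin⟩, ?_, ?_⟩
    · intro a ha b hb
      exact ((@Relation.ReflTransGen.stdSymm _ _ ⟨fun _ _ h => hsymm h⟩).symm _ _ (conn_x ℓc le_rfl a ha)).trans
        (conn_x ℓc le_rfl b hb)
    · intro a ha b hbS hab hnadj
      by_contra hbC
      rcases cover b hbS with hbS1 | hb0
      · obtain ⟨D, hD, hbD⟩ := exists_cocomp G hbS1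
        obtain ⟨j, hj1, hj2, hjD⟩ := hCcAll D hD
        have hbCc : b ∈ Cc j := by rw [← hjD]; exact hbD
        by_cases hcond : (∀ a' ∈ Cc j, ∀ b' ∈ Cseq (j - 1), G.Adj a' b')
        · exact hnadj (univ_final j hj1 hj2 hcond b hbCc a ha).symm
        · exact hbC (absorbed_sub j hj1 hj2 hcond hbCc)
      · exact hbC (hmono 0 ℓc (Nat.zero_le _) le_rfl hb0)
  -- each Cc i universal to the final set is a co-component of the slice
  have hCi_cocomp : ∀ i, 1 ≤ i → i ≤ ℓc →
      (∀ a ∈ Cc i, ∀ b ∈ Cseq ℓc, G.Adj a b) →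
      IsCoComponentOn G (sliceAt G σ n t) (Cc i) := by
    intro i h1 h2 huniv
    refine ⟨(hCcS1 i h1 h2).trans hS1S, (hCc i h1 h2).2.1,
      cocomp_connected_mono G hS1S (hCc i h1 h2), ?_⟩
    intro a ha b hbS hab hnadj
    rcases cover b hbS with hbS1 | hb0
    · exact (hCc i h1 h2).2.2.2 a ha b hbS1 hab hnadj
    · exact absurd (huniv a ha b (hmono 0 ℓc (Nat.zero_le _) le_rfl hb0)) hnadj
  -- conclusion
  intro D
  constructor
  · intro hD
    by_cases hinter : (D ∩ Cseq ℓc).Nonempty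
    · obtain ⟨v, hv1, hv2⟩ := hinter
      exact Or.inl (cocomp_eq_of_inter G hD hCmain hv1 hv2)
    · have hdisj : ∀ v ∈ D, v ∉ Cseq ℓc := fun v hv hv2 => hinter ⟨v, hv, hv2⟩
      have hDS1 : D ⊆ sliceAt G σ n (u 1) := by
        intro v hv
        rcases cover v (hD.1 hv) with h | h
        · exact h
        · exact absurd (hmono 0 ℓc (Nat.zero_le _) le_rfl h) (hdisj v hv)
      have hDco1 : IsCoComponentOn G (sliceAt G σ n (u 1)) D := by
        refine ⟨hDS1, hD.2.1, ?_,
          fun a ha b hb hne hnadj => hD.2.2.2 a ha b (hS1S hb) hne hnadj⟩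
        intro a ha b hb
        exact path_restrict G hDS1 hD.2.2.2 ha (hD.2.2.1 a ha b hb)
      obtain ⟨i, h1, h2, hieq⟩ := hCcAll D hDco1
      refine Or.inr ⟨i, h1, h2, ?_, hieq⟩
      intro a ha b hb
      by_contra hnadj
      have haD : a ∈ D := by rw [hieq]; exact ha
      by_cases hab : a = b
      · exact hdisj a haD (hab ▸ hb)
      · exact hdisj b (hD.2.2.2 a haD b (hCseqS ℓc le_rfl hb) hab hnadj) hb
  · rintro (rfl | ⟨i, h1, h2, huniv, rfl⟩)
    · exact hCmain
    · exact hCi_cocomp i h1 h2 huniv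
end
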